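/- For every even n ≥ 10 there exists an n-vertex conjugated bicyclic graph G with τ(G) = 7n/2 − 4; hence the lower bound 7n/2 − 4 for the total-eccentricity index of n-vertex conjugated bicyclic graphs is attained. (Such a graph B̅_1 is obtained from the spider with center v and n/2 legs, of which n/2 − 1 legs have length 2 and one leg has length 1, by adding two edges between v and two distinct vertices at distance 2 from v.) -/

import Mathlib

open SimpleGraph Finset

/-- The eccentricity of a vertex `v` in a graph `G`: the maximum distance from `v`
to any vertex of `G`. -/
noncomputable def ecc {V : Type} [Fintype V] (G : SimpleGraph V) (v : V) : ℕ :=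
  Finset.univ.sup fun w => G.dist v w

/-- The total-eccentricity index `τ(G) = ∑_{v ∈ V(G)} e_G(v)`. -/
noncomputable def totalEcc {V : Type} [Fintype V] (G : SimpleGraph V) : ℕ :=
  ∑ v : V, ecc G v

namespace CB

/-- Arithmetic adjacency relation for the extremal conjugated bicyclic graph `B̄₁`.
Vertex `0` is the center, vertex `1` is the pendant leg of length one, and for each
`j ≥ 1` the vertices `2j` and `2j+1` form a leg of length two (with `2j` adjacent to the
center).  The two extra edges join the center to the leg-ends `3` and `5`. -/
def AdjN (a b : ℕ) : Prop :=
  (a = 0 ∧ (b = 1 ∨ b = 3 ∨ b = 5 ∨ (b % 2 = 0 ∧ 2 ≤ b))) ∨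
  (b = a + 1 ∧ a % 2 = 0 ∧ 2 ≤ a) ∨
  (b = 0 ∧ (a = 1 ∨ a = 3 ∨ a = 5 ∨ (a % 2 = 0 ∧ 2 ≤ a))) ∨
  (a = b + 1 ∧ b % 2 = 0 ∧ 2 ≤ b)

instance (a b : ℕ) : Decidable (AdjN a b) := by unfold AdjN; infer_instance

/-- The extremal graph on `Fin n`. -/
def gph (n : ℕ) : SimpleGraph (Fin n) where
  Adj v w := AdjN v.val w.val
  symm := ⟨by intro v w h; unfold AdjN at *; omega⟩
  loopless := ⟨by intro v h; unfold AdjN at h; omega⟩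

lemma adj_def {n : ℕ} {v w : Fin n} : (gph n).Adj v w ↔ AdjN v.val w.val := Iff.rfl

instance {n : ℕ} : DecidableRel (gph n).Adj :=
  fun v w => inferInstanceAs (Decidable (AdjN v.val w.val))

section WalkLemmas

variable {V : Type} {G : SimpleGraph V} {u v : V}

lemma walk_le_one (p : G.Walk u v) (hl : p.length ≤ 1) : u = v ∨ G.Adj u v := by
  cases p with
  | nil => exact Or.inl rfl
  | cons h q =>
    cases q with
    | nil => exact Or.inr h
    | cons h' q' => simp [SimpleGraph.Walk.length_cons] at hl

lemma walk_le_two (p : G.Walk u v) (hl : p.length ≤ 2) :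
    u = v ∨ G.Adj u v ∨ ∃ a, G.Adj u a ∧ G.Adj a v := by
  cases p with
  | nil => exact Or.inl rfl
  | @cons _ a _ h q =>
    have hq : q.length ≤ 1 := by simp [SimpleGraph.Walk.length_cons] at hl; omega
    rcases walk_le_one q hq with rfl | h2
    · exact Or.inr (Or.inl h)
    · exact Or.inr (Or.inr ⟨a, h, h2⟩)

lemma walk_le_three (p : G.Walk u v) (hl : p.length ≤ 3) :
    u = v ∨ G.Adj u v ∨ (∃ a, G.Adj u a ∧ G.Adj a v) ∨
      ∃ a b, G.Adj u a ∧ G.Adj a b ∧ G.Adj b v := by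
  cases p with
  | nil => exact Or.inl rfl
  | @cons _ a _ h q =>
    have hq : q.length ≤ 2 := by simp [SimpleGraph.Walk.length_cons] at hl; omega
    rcases walk_le_two q hq with rfl | h2 | ⟨b, hb1, hb2⟩
    · exact Or.inr (Or.inl h)
    · exact Or.inr (Or.inr (Or.inl ⟨a, h, h2⟩))
    · exact Or.inr (Or.inr (Or.inr ⟨a, b, h, hb1, hb2⟩))

lemma two_le_dist (hr : G.Reachable u v) (hne : u ≠ v) (h1 : ¬ G.Adj u v) :
    2 ≤ G.dist u v := by
  by_contra hlt
  push_neg at hlt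
  obtain ⟨p, hp⟩ := hr.exists_walk_length_eq_dist
  rcases walk_le_one p (by omega) with h | h
  exacts [hne h, h1 h]

lemma three_le_dist (hr : G.Reachable u v) (hne : u ≠ v) (h1 : ¬ G.Adj u v)
    (h2 : ∀ a, ¬ (G.Adj u a ∧ G.Adj a v)) : 3 ≤ G.dist u v := by
  by_contra hlt
  push_neg at hlt
  obtain ⟨p, hp⟩ := hr.exists_walk_length_eq_dist
  rcases walk_le_two p (by omega) with h | h | ⟨a, ha⟩
  exacts [hne h, h1 h, h2 a ha]

lemma four_le_dist (hr : G.Reachable u v) (hne : u ≠ v) (h1 : ¬ G.Adj u v)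
    (h2 : ∀ a, ¬ (G.Adj u a ∧ G.Adj a v))
    (h3 : ∀ a b, ¬ (G.Adj u a ∧ G.Adj a b ∧ G.Adj b v)) : 4 ≤ G.dist u v := by
  by_contra hlt
  push_neg at hlt
  obtain ⟨p, hp⟩ := hr.exists_walk_length_eq_dist
  rcases walk_le_three p (by omega) with h | h | ⟨a, ha⟩ | ⟨a, b, hab⟩
  exacts [hne h, h1 h, h2 a ha, h3 a b hab]

end WalkLemmas

lemma sum_even_step (h : ℕ → ℕ) (d : ℕ) (hd : ∀ m, 5 ≤ m → h (2*m) + h (2*m+1) = d)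
    {k : ℕ} (hk : 5 ≤ k) :
    ∑ x ∈ Finset.range (2*k), h x = (∑ x ∈ Finset.range 10, h x) + d * (k - 5) := by
  induction k, hk using Nat.le_induction with
  | base => norm_num
  | succ k hk ih =>
    have h2 : 2*(k+1) = (2*k + 1) + 1 := by ring
    rw [h2, Finset.sum_range_succ, Finset.sum_range_succ, ih,
      show k + 1 - 5 = (k - 5) + 1 by omega, Nat.mul_succ]
    have := hd k hk
    omega

variable {n : ℕ}

/-- A walk from the center to any vertex, of length at most two. -/
lemma walk0 (hn : 10 ≤ n) (w : Fin n) :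
    ∃ p : (gph n).Walk ⟨0, by omega⟩ w, p.length ≤ 2 := by
  by_cases h0 : w.val = 0
  · have hw : w = ⟨0, by omega⟩ := Fin.ext h0
    exact ⟨Walk.nil.copy rfl hw.symm, by simp⟩
  by_cases h1 : w.val % 2 = 1 ∧ 7 ≤ w.val
  · have ha1 : (gph n).Adj ⟨0, by omega⟩ ⟨w.val - 1, by omega⟩ := by
      rw [adj_def]; simp only [Fin.val_mk]; unfold AdjN; omega
    have ha2 : (gph n).Adj ⟨w.val - 1, by omega⟩ w := by
      rw [adj_def]; simp only [Fin.val_mk]; unfold AdjN; omega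
    exact ⟨Walk.cons ha1 (Walk.cons ha2 Walk.nil), by simp⟩
  · have ha : (gph n).Adj ⟨0, by omega⟩ w := by
      rw [adj_def]; simp only [Fin.val_mk]; unfold AdjN; omega
    exact ⟨Walk.cons ha Walk.nil, by simp⟩

lemma conn (hn : 10 ≤ n) : (gph n).Connected := by
  rw [connected_iff]
  refine ⟨fun u v => ?_, ⟨⟨0, by omega⟩⟩⟩
  obtain ⟨p, -⟩ := walk0 hn u
  obtain ⟨q, -⟩ := walk0 hn v
  exact p.reverse.reachable.trans q.reachable

lemma dist0_le2 (hn : 10 ≤ n) (w : Fin n) : (gph n).dist ⟨0, by omega⟩ w ≤ 2 := by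
  obtain ⟨p, hp⟩ := walk0 hn w
  exact le_trans (dist_le p) hp

lemma dist0_le1 (hn : 10 ≤ n) (w : Fin n)
    (hw : (w.val % 2 = 0 ∧ 2 ≤ w.val) ∨ w.val = 1 ∨ w.val = 3 ∨ w.val = 5) :
    (gph n).dist ⟨0, by omega⟩ w ≤ 1 := by
  have h : (gph n).Adj ⟨0, by omega⟩ w := by
    rw [adj_def]; simp only [Fin.val_mk]; unfold AdjN; omega
  exact le_trans (dist_le (Walk.cons h Walk.nil)) (by simp)

/-- The eccentricity of each vertex, by class. -/
def eccVal (x : ℕ) : ℕ := if x % 2 = 1 ∧ 7 ≤ x then 4 else if x = 0 then 2 else 3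

lemma ecc_eq (hn : 10 ≤ n) (v : Fin n) : ecc (gph n) v = eccVal v.val := by
  have hconn := conn hn
  have tri : ∀ w : Fin n, (gph n).dist v w ≤
      (gph n).dist ⟨0, by omega⟩ v + (gph n).dist ⟨0, by omega⟩ w := by
    intro w
    calc (gph n).dist v w
        ≤ (gph n).dist v ⟨0, by omega⟩ + (gph n).dist ⟨0, by omega⟩ w := hconn.dist_triangle
      _ = _ := by rw [SimpleGraph.dist_comm (v := v)]
  unfold ecc eccVal
  by_cases hA : v.val % 2 = 1 ∧ 7 ≤ v.val
  · rw [if_pos hA]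
    apply le_antisymm
    · apply Finset.sup_le
      intro w _
      have h1 : (gph n).dist ⟨0, by omega⟩ v ≤ 2 := dist0_le2 hn v
      have h2 := dist0_le2 hn w
      have := tri w
      omega
    · set t := (if v.val = 7 then 9 else 7 : ℕ) with ht
      obtain ⟨ht1, ht2⟩ : (t = 7 ∨ t = 9) ∧ t ≠ v.val := by rw [ht]; split <;> omega
      have hw0 : t < n := by omega
      have hd : 4 ≤ (gph n).dist v ⟨t, hw0⟩ := by
        apply four_le_dist (hconn v _)
        · intro h
          have := congrArg Fin.val h
          simp only [Fin.val_mk] at this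
          omega
        · rw [adj_def]; simp only [Fin.val_mk]; unfold AdjN; omega
        · rintro a ⟨h1, h2⟩
          rw [adj_def] at h1 h2
          simp only [Fin.val_mk] at h1 h2
          unfold AdjN at h1 h2
          omega
        · rintro a b ⟨h1, h2, h3⟩
          rw [adj_def] at h1 h2 h3
          simp only [Fin.val_mk] at h1 h2 h3
          unfold AdjN at h1 h2 h3
          omega
      exact le_trans hd (Finset.le_sup (Finset.mem_univ _))
  by_cases hB : v.val = 0
  · rw [if_neg hA, if_pos hB]
    have hv : v = ⟨0, by omega⟩ := Fin.ext hB
    rw [hv]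
    apply le_antisymm
    · exact Finset.sup_le fun w _ => dist0_le2 hn w
    · have hd : 2 ≤ (gph n).dist ⟨0, by omega⟩ ⟨7, by omega⟩ := by
        apply two_le_dist (hconn _ _)
        · intro h
          have := congrArg Fin.val h
          simp only [Fin.val_mk] at this
          omega
        · rw [adj_def]; simp only [Fin.val_mk]; unfold AdjN; omega
      exact le_trans hd (Finset.le_sup (Finset.mem_univ _))
  · rw [if_neg hA, if_neg hB]
    apply le_antisymm
    · apply Finset.sup_le
      intro w _
      have h1 : (gph n).dist ⟨0, by omega⟩ v ≤ 1 := dist0_le1 hn v (by omega)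
      have h2 := dist0_le2 hn w
      have := tri w
      omega
    · set t := (if v.val = 6 then 9 else 7 : ℕ) with ht
      obtain ⟨ht1, ht2, ht3⟩ : (t = 7 ∨ t = 9) ∧ t ≠ v.val ∧ t ≠ v.val + 1 := by
        rw [ht]; split <;> omega
      have hw0 : t < n := by omega
      have hd : 3 ≤ (gph n).dist v ⟨t, hw0⟩ := by
        apply three_le_dist (hconn v _)
        · intro h
          have := congrArg Fin.val h
          simp only [Fin.val_mk] at this
          omega
        · rw [adj_def]; simp only [Fin.val_mk]; unfold AdjN; omega
        · rintro a ⟨h1, h2⟩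
          rw [adj_def] at h1 h2
          simp only [Fin.val_mk] at h1 h2
          unfold AdjN at h1 h2
          omega
      exact le_trans hd (Finset.le_sup (Finset.mem_univ _))

lemma totalEcc_eq (hn : 10 ≤ n) (he : n % 2 = 0) : totalEcc (gph n) = 7 * (n / 2) - 4 := by
  obtain ⟨k, hk⟩ : ∃ k, n = 2 * k := ⟨n / 2, by omega⟩
  have h1 : totalEcc (gph n) = ∑ x ∈ Finset.range n, eccVal x := by
    unfold totalEcc
    exact (Finset.sum_congr rfl fun v _ => ecc_eq hn v).trans
      (Fin.sum_univ_eq_sum_range eccVal n)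
  rw [h1, hk, sum_even_step eccVal 7 ?_ (by omega)]
  · have hb : (∑ x ∈ Finset.range 10, eccVal x) = 31 := by decide
    omega
  · intro m hm
    have e1 : eccVal (2*m) = 3 := by
      unfold eccVal; rw [if_neg (by omega), if_neg (by omega)]
    have e2 : eccVal (2*m+1) = 4 := by unfold eccVal; rw [if_pos (by omega)]
    omega

/-- The number of neighbors of the vertex with value `y`. -/
lemma F_eq (hn : 10 ≤ n) (he : n % 2 = 0) (y : ℕ) (hy : y < n) :
    (∑ x ∈ Finset.range n, if AdjN y x then 1 else 0) =
      (if y = 0 then n / 2 + 2 else if y = 1 ∨ (y % 2 = 1 ∧ 7 ≤ y) then 1 else 2) := by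
  obtain ⟨k, hk⟩ : ∃ k, n = 2 * k := ⟨n / 2, by omega⟩
  by_cases h0 : y = 0
  · subst h0
    rw [if_pos rfl, hk]
    rw [sum_even_step _ 1 ?_ (by omega)]
    · have hb : (∑ x ∈ Finset.range 10, if AdjN 0 x then (1:ℕ) else 0) = 7 := by decide
      omega
    · intro m hm
      have e1 : (if AdjN 0 (2*m) then (1:ℕ) else 0) = 1 := if_pos (by unfold AdjN; omega)
      have e2 : (if AdjN 0 (2*m+1) then (1:ℕ) else 0) = 0 := if_neg (by unfold AdjN; omega)
      omega
  rw [if_neg h0]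
  by_cases h1 : y = 1 ∨ (y % 2 = 1 ∧ 7 ≤ y)
  · rw [if_pos h1]
    set c := (if y = 1 then 0 else y - 1 : ℕ) with hc
    obtain ⟨hc1, hc2⟩ : ((y = 1 ∧ c = 0) ∨ (y ≠ 1 ∧ c = y - 1)) ∧ c < n := by
      rw [hc]; split <;> omega
    have hiff : ∀ x : ℕ, AdjN y x ↔ x = c := by intro x; unfold AdjN; omega
    rw [Finset.sum_congr rfl fun x _ => if_congr (hiff x) rfl rfl]
    rw [Finset.sum_ite_eq' (Finset.range n) c (fun _ => 1)]
    rw [if_pos (Finset.mem_range.mpr hc2)]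
  · rw [if_neg h1]
    set c := (if y % 2 = 0 then y + 1 else y - 1 : ℕ) with hc
    obtain ⟨hc1, hc2, hc3⟩ :
        ((y % 2 = 0 ∧ c = y + 1) ∨ (y % 2 = 1 ∧ c = y - 1)) ∧ c < n ∧ c ≠ 0 := by
      rw [hc]; split <;> omega
    have hiff : ∀ x : ℕ, AdjN y x ↔ (x = 0 ∨ x = c) := by intro x; unfold AdjN; omega
    rw [Finset.sum_congr rfl fun x _ => if_congr (hiff x) rfl rfl]
    have hsplit : ∀ x : ℕ, (if x = 0 ∨ x = c then (1:ℕ) else 0) =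
        (if x = 0 then 1 else 0) + (if x = c then 1 else 0) := by
      intro x; split_ifs <;> omega
    rw [Finset.sum_congr rfl fun x _ => hsplit x, Finset.sum_add_distrib]
    rw [Finset.sum_ite_eq' (Finset.range n) 0 (fun _ => 1),
      Finset.sum_ite_eq' (Finset.range n) c (fun _ => 1)]
    rw [if_pos (Finset.mem_range.mpr (by omega)), if_pos (Finset.mem_range.mpr hc2)]

lemma card_edges (hn : 10 ≤ n) (he : n % 2 = 0) : (gph n).edgeSet.ncard = n + 1 := by
  obtain ⟨k, hk⟩ : ∃ k, n = 2 * k := ⟨n / 2, by omega⟩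
  have hdeg : ∀ v : Fin n, (gph n).degree v =
      ∑ x ∈ Finset.range n, (if AdjN v.val x then 1 else 0) := by
    intro v
    unfold SimpleGraph.degree
    rw [neighborFinset_eq_filter, Finset.card_filter]
    rw [← Fin.sum_univ_eq_sum_range (fun x => if AdjN v.val x then 1 else 0) n]
    exact Finset.sum_congr rfl fun w _ => if_congr Iff.rfl rfl rfl
  have hsum : ∑ v : Fin n, (gph n).degree v = 2 * n + 2 := by
    have step1 : ∑ v : Fin n, (gph n).degree v = ∑ y ∈ Finset.range n,
        (if y = 0 then n / 2 + 2 else if y = 1 ∨ (y % 2 = 1 ∧ 7 ≤ y) then 1 else 2) := by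
      rw [← Fin.sum_univ_eq_sum_range
        (fun y => if y = 0 then n / 2 + 2 else if y = 1 ∨ (y % 2 = 1 ∧ 7 ≤ y) then 1 else 2) n]
      exact Finset.sum_congr rfl fun v _ => by rw [hdeg v, F_eq hn he v.val v.isLt]
    have hsplit : ∀ y : ℕ,
        (if y = 0 then n / 2 + 2 else if y = 1 ∨ (y % 2 = 1 ∧ 7 ≤ y) then 1 else 2) =
        (if y = 0 then n / 2 + 2 else 0) +
          (if y = 0 then 0 else if y = 1 ∨ (y % 2 = 1 ∧ 7 ≤ y) then 1 else 2) := by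
      intro y; split_ifs <;> omega
    rw [step1, Finset.sum_congr rfl fun y _ => hsplit y, Finset.sum_add_distrib]
    rw [Finset.sum_ite_eq' (Finset.range n) 0 (fun _ => n / 2 + 2)]
    rw [if_pos (Finset.mem_range.mpr (by omega))]
    have hrest : ∑ y ∈ Finset.range n,
        (if y = 0 then 0 else if y = 1 ∨ (y % 2 = 1 ∧ 7 ≤ y) then 1 else 2)
          = 15 + 3 * (k - 5) := by
      rw [hk, sum_even_step _ 3 ?_ (by omega)]
      · have hb : (∑ y ∈ Finset.range 10,
            if y = 0 then (0:ℕ) else if y = 1 ∨ (y % 2 = 1 ∧ 7 ≤ y) then 1 else 2) = 15 := by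
          decide
        omega
      · intro m hm
        have e1 : (if 2*m = 0 then (0:ℕ) else
            if 2*m = 1 ∨ ((2*m) % 2 = 1 ∧ 7 ≤ 2*m) then 1 else 2) = 2 := by
          rw [if_neg (by omega), if_neg (by omega)]
        have e2 : (if 2*m+1 = 0 then (0:ℕ) else
            if 2*m+1 = 1 ∨ ((2*m+1) % 2 = 1 ∧ 7 ≤ 2*m+1) then 1 else 2) = 1 := by
          rw [if_neg (by omega), if_pos (by omega)]
        omega
    rw [hrest]
    omega
  have htwice := SimpleGraph.sum_degrees_eq_twice_card_edges (gph n)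
  rw [← SimpleGraph.coe_edgeFinset, Set.ncard_coe_finset]
  omega

/-- Arithmetic adjacency of the perfect matching: `2j` is matched with `2j+1`. -/
def mAdjN (a b : ℕ) : Prop := (b = a + 1 ∧ a % 2 = 0) ∨ (a = b + 1 ∧ b % 2 = 0)

/-- The perfect matching subgraph. -/
def mtch (n : ℕ) : (gph n).Subgraph where
  verts := Set.univ
  Adj a b := mAdjN a.val b.val
  adj_sub := by
    intro a b h
    rw [adj_def]
    unfold mAdjN at h
    unfold AdjN
    omega
  edge_vert := by intro a b _; trivial
  symm := ⟨by intro a b h; unfold mAdjN at *; omega⟩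

lemma mtch_perfect (he : n % 2 = 0) : (mtch n).IsPerfectMatching := by
  rw [Subgraph.isPerfectMatching_iff]
  intro v
  by_cases hv : v.val % 2 = 0
  · refine ⟨⟨v.val + 1, by omega⟩, ?_, ?_⟩
    · show mAdjN v.val _
      simp only [Fin.val_mk]
      unfold mAdjN
      omega
    · intro y hy
      have h : mAdjN v.val y.val := hy
      unfold mAdjN at h
      apply Fin.ext
      simp only [Fin.val_mk]
      omega
  · refine ⟨⟨v.val - 1, by omega⟩, ?_, ?_⟩
    · show mAdjN v.val _
      simp only [Fin.val_mk]
      unfold mAdjN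
      omega
    · intro y hy
      have h : mAdjN v.val y.val := hy
      unfold mAdjN at h
      apply Fin.ext
      simp only [Fin.val_mk]
      omega

end CB

/-- For every even `n ≥ 10`, there is an `n`-vertex conjugated bicyclic graph whose
total-eccentricity index equals `7n/2 - 4`; i.e. the lower bound is attained. -/
theorem conjugated_bicyclic_lower_bound_attained (n : ℕ) (hn : 10 ≤ n) (hev : Even n) :
    ∃ G : SimpleGraph (Fin n), G.Connected ∧ G.edgeSet.ncard = n + 1 ∧
      (∃ M : G.Subgraph, M.IsPerfectMatching) ∧
      (totalEcc G : ℚ) = 7 * n / 2 - 4 := by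
  have he : n % 2 = 0 := by
    obtain ⟨r, hr⟩ := hev
    omega
  refine ⟨CB.gph n, CB.conn hn, CB.card_edges hn he, ⟨CB.mtch n, CB.mtch_perfect he⟩, ?_⟩
  rw [CB.totalEcc_eq hn he]
  obtain ⟨k, hk⟩ : ∃ k, n = 2 * k := ⟨n / 2, by omega⟩
  rw [show n / 2 = k from by omega]
  rw [Nat.cast_sub (by omega)]
  push_cast
  have hq : (n : ℚ) = 2 * (k : ℚ) := by exact_mod_cast hk
  rw [hq]
  ring
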